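/- Let f ∈ Ω and let z ∈ 𝔻 with z ≠ 0. Then f(z) ≠ 0 and |z·f'(z)/f(z) − 1| ≤ |z|/(2 − |z|). -/

import Mathlib

open Complex Metric
open Filter Asymptotics Set Topology

/-- The open unit disc in `ℂ`. -/
def unitDisc : Set ℂ := Metric.ball 0 1

/-- `f ∈ 𝒜ₙ`: `f` is analytic on the unit disc with power series
`f(z) = z + ∑_{k=n+1}^∞ a_k z^k`. -/
def MemA (n : ℕ) (f : ℂ → ℂ) : Prop :=
  DifferentiableOn ℂ f unitDisc ∧
    ∃ a : ℕ → ℂ, ∀ z ∈ unitDisc, f z = z + ∑' k : ℕ, a k * z ^ (n + 1 + k)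

/-- `f ∈ Ωₙ`: `f ∈ 𝒜ₙ` and `|z f'(z) - f(z)| < 1/2` on the unit disc. -/
def MemOmega (n : ℕ) (f : ℂ → ℂ) : Prop :=
  MemA n f ∧ ∀ z ∈ unitDisc, ‖z * deriv f z - f z‖ < 1 / 2

theorem stmt_14 (f : ℂ → ℂ) (hf : MemOmega 1 f) (z : ℂ) (hz : z ∈ unitDisc) (hz0 : z ≠ 0) :
    f z ≠ 0 ∧ ‖z * deriv f z / f z - 1‖ ≤ ‖z‖ / (2 - ‖z‖) := by
  obtain ⟨⟨hdiff, a, hser⟩, hbnd⟩ := hf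
  have hD : IsOpen unitDisc := isOpen_ball
  have h0 : (0:ℂ) ∈ unitDisc := by simp [unitDisc]
  have hf0 : f 0 = 0 := by
    have := hser 0 h0
    simpa using this
  have hd1 : deriv f 0 = 1 := by
    have hderiv_u : HasDerivAt (fun w => f w - w) 0 0 := by
      by_cases hA : ∃ z₀ ∈ unitDisc, z₀ ≠ 0 ∧ Summable (fun k => a k * z₀ ^ (1+1+k))
      · obtain ⟨z₀, hz₀D, hz₀ne, hsum⟩ := hA
        set s := ‖z₀‖ with hs
        have hs0 : 0 < s := norm_pos_iff.mpr hz₀ne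
        have hsum' : Summable (fun k => ‖a k * z₀ ^ (1+1+k)‖) := summable_norm_iff.mpr hsum
        set C := ∑' k:ℕ, ‖a k * z₀ ^ (1+1+k)‖ with hC
        have hC0 : 0 ≤ C := tsum_nonneg (fun k => norm_nonneg _)
        have hCk : ∀ k, ‖a k‖ * s ^ (1+1+k) ≤ C := by
          intro k
          have h1 : ‖a k‖ * s ^ (1+1+k) = ‖a k * z₀ ^ (1+1+k)‖ := by
            rw [norm_mul, norm_pow]
          rw [h1]
          exact Summable.le_tsum hsum' k (fun j _ => norm_nonneg _)
        have hbd : ∀ w : ℂ, ‖w‖ < s/2 → ‖f w - w‖ ≤ (2*C/s^2) * ‖w‖^2 := by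
          intro w hw
          have hs1 : s < 1 := by simpa [unitDisc, mem_ball_zero_iff] using hz₀D
          have hwD : w ∈ unitDisc := by
            simp only [unitDisc, mem_ball_zero_iff]
            linarith
          set r := ‖w‖ with hr
          have hr0 : 0 ≤ r := norm_nonneg _
          set t := r / s with ht
          have ht0 : 0 ≤ t := div_nonneg hr0 hs0.le
          have ht2 : t ≤ 1/2 := by
            rw [ht, div_le_iff₀ hs0]; linarith
          have hterm : ∀ k, ‖a k * w ^ (1+1+k)‖ ≤ C * t^2 * (1/2)^k := by
            intro k
            have hrts : r = t * s := by rw [ht, div_mul_cancel₀ r hs0.ne']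
            have h1 : ‖a k * w ^ (1+1+k)‖ = ‖a k‖ * r ^ (1+1+k) := by
              simp [norm_mul, norm_pow, hr]
            rw [h1, hrts, mul_pow]
            have h2 : ‖a k‖ * (t ^ (1+1+k) * s ^ (1+1+k)) = t^(1+1+k) * (‖a k‖ * s^(1+1+k)) := by ring
            rw [h2]
            have h3 : t^(1+1+k) * (‖a k‖ * s^(1+1+k)) ≤ t^(1+1+k) * C :=
              mul_le_mul_of_nonneg_left (hCk k) (pow_nonneg ht0 _)
            refine h3.trans ?_
            have h4 : t^(1+1+k) = t^2 * t^k := by ring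
            rw [h4]
            have h5 : t^k ≤ (1/2)^k := pow_le_pow_left₀ ht0 ht2 k
            calc t^2 * t^k * C ≤ t^2 * (1/2)^k * C := by
                  apply mul_le_mul_of_nonneg_right _ hC0
                  exact mul_le_mul_of_nonneg_left h5 (pow_nonneg ht0 _)
              _ = C * t^2 * (1/2)^k := by ring
          have hgeo : Summable (fun k : ℕ => C * t^2 * (1/2:ℝ)^k) :=
            (summable_geometric_of_lt_one (by norm_num) (by norm_num)).mul_left _
          have hsumw : Summable (fun k => ‖a k * w ^ (1+1+k)‖) :=
            Summable.of_nonneg_of_le (fun k => norm_nonneg _) hterm hgeo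
          have : ‖f w - w‖ = ‖∑' k:ℕ, a k * w ^ (1+1+k)‖ := by
            rw [hser w hwD, add_sub_cancel_left]
          rw [this]
          calc ‖∑' k:ℕ, a k * w ^ (1+1+k)‖ ≤ ∑' k:ℕ, ‖a k * w ^ (1+1+k)‖ :=
                norm_tsum_le_tsum_norm hsumw
            _ ≤ ∑' k:ℕ, C * t^2 * (1/2:ℝ)^k := Summable.tsum_le_tsum hterm hsumw hgeo
            _ = C * t^2 * (1-1/2)⁻¹ := by
                rw [tsum_mul_left, tsum_geometric_of_lt_one (by norm_num) (by norm_num)]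
            _ = (2*C/s^2) * r^2 := by
                rw [ht]; field_simp; ring
        have hO : (fun w => f w - w) =O[𝓝 0] (fun w : ℂ => w^2) := by
          apply IsBigO.of_bound (2*C/s^2)
          have hball : ∀ᶠ w : ℂ in 𝓝 0, w ∈ ball (0:ℂ) (s/2) :=
            isOpen_ball.eventually_mem (mem_ball_self (by positivity))
          filter_upwards [hball] with w hw
          have := hbd w (by simpa [mem_ball_zero_iff] using hw)
          simpa [norm_pow] using this
        have h2o : (fun w : ℂ => w^2) =o[𝓝 0] (fun w : ℂ => w) := by
          have hid : (fun w : ℂ => w) =o[𝓝 0] (fun _ : ℂ => (1:ℂ)) := by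
            rw [isLittleO_one_iff]
            exact Filter.tendsto_id
          have := hid.mul_isBigO (isBigO_refl (fun w : ℂ => w) (𝓝 0))
          simpa [pow_two] using this
        have hlittle : (fun w => f w - w) =o[𝓝 0] (fun w : ℂ => w) := hO.trans_isLittleO h2o
        rw [hasDerivAt_iff_isLittleO]
        simpa [hf0] using hlittle
      · push_neg at hA
        have hev : ∀ᶠ w in 𝓝 (0:ℂ), f w - w = 0 := by
          filter_upwards [hD.eventually_mem h0] with w hw
          rcases eq_or_ne w 0 with rfl | hw0
          · simp [hf0]
          · rw [hser w hw, tsum_eq_zero_of_not_summable (hA w hw hw0)]; ring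
        exact (hasDerivAt_const (0:ℂ) (0:ℂ)).congr_of_eventuallyEq hev
    have : HasDerivAt f 1 0 := by
      have := hderiv_u.add (hasDerivAt_id (0:ℂ))
      simp at this; exact this.congr_of_eventuallyEq (Filter.Eventually.of_forall fun w => by simp)
    exact this.deriv
  -- F = dslope f 0
  set F := dslope f 0 with hF
  have hFdiff : DifferentiableOn ℂ F unitDisc :=
    (differentiableOn_dslope (hD.mem_nhds h0)).mpr hdiff
  have hFan : AnalyticOnNhd ℂ F unitDisc := hFdiff.analyticOnNhd hD
  have hdFdiff : DifferentiableOn ℂ (deriv F) unitDisc := hFan.deriv.differentiableOn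
  have hFz : ∀ w : ℂ, w ≠ 0 → F w = f w / w := by
    intro w hw0
    rw [hF, dslope_of_ne f hw0, slope_def_field]
    simp [hf0]
  have hderivF : ∀ w ∈ unitDisc, w ≠ 0 → deriv F w = (w * deriv f w - f w) / w^2 := by
    intro w hw hw0
    have he : F =ᶠ[𝓝 w] fun x => f x / x := by
      filter_upwards [eventually_ne_nhds hw0] with x hx
      exact hFz x hx
    rw [he.deriv_eq, deriv_fun_div (hdiff.differentiableAt (hD.mem_nhds hw))
      differentiableAt_fun_id hw0]
    simp only [deriv_id'']
    ring
  have hbound : ∀ w ∈ unitDisc, ‖deriv F w‖ ≤ 1/2 := by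
    intro w hw
    have hw1 : ‖w‖ < 1 := by simpa [unitDisc, mem_ball_zero_iff] using hw
    have key : ∀ r : ℝ, ‖w‖ < r → r < 1 → ‖deriv F w‖ ≤ 1/(2*r^2) := by
      intro r hr1 hr2
      have hr0 : 0 < r := lt_of_le_of_lt (norm_nonneg w) hr1
      have hcl : closure (ball (0:ℂ) r) = closedBall 0 r := closure_ball 0 hr0.ne'
      apply Complex.norm_le_of_forall_mem_frontier_norm_le (isBounded_ball (x := (0:ℂ)) (r := r))
      · apply DifferentiableOn.diffContOnCl
        rw [hcl]
        exact hdFdiff.mono (closedBall_subset_ball hr2)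
      · intro x hx
        rw [frontier_ball 0 hr0.ne'] at hx
        have hxr : ‖x‖ = r := by simpa [mem_sphere_iff_norm] using hx
        have hxD : x ∈ unitDisc := by simp [unitDisc, mem_ball_zero_iff, hxr, hr2]
        have hx0 : x ≠ 0 := by
          intro h; rw [h] at hxr; simp at hxr; exact hr0.ne' hxr.symm
        rw [hderivF x hxD hx0, norm_div, norm_pow, hxr]
        have := (hbnd x hxD).le
        have hr2pos : (0:ℝ) < r^2 := by positivity
        rw [div_le_div_iff₀ hr2pos (by positivity)]
        calc ‖x * deriv f x - f x‖ * (2*r^2) ≤ (1/2) * (2*r^2) := by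
              apply mul_le_mul_of_nonneg_right this (by positivity)
          _ = 1 * r^2 := by ring
      · rw [hcl]
        exact mem_closedBall_zero_iff.mpr (le_of_lt hr1)
    have htend : Tendsto (fun r : ℝ => 1/(2*r^2)) (𝓝[<] 1) (𝓝 (1/2)) := by
      have hc : ContinuousAt (fun r : ℝ => 1/(2*r^2)) 1 :=
        ContinuousAt.div continuousAt_const (by fun_prop) (by norm_num)
      have h2 := hc.tendsto.mono_left (nhdsWithin_le_nhds (s := Iio (1:ℝ)))
      norm_num at h2 ⊢
      exact h2
    have hev : ∀ᶠ r in 𝓝[<] (1:ℝ), ‖deriv F w‖ ≤ 1/(2*r^2) := by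
      filter_upwards [Ioo_mem_nhdsLT_of_mem (show (1:ℝ) ∈ Ioc ‖w‖ 1 from ⟨hw1, le_refl 1⟩)]
        with r hr
      exact key r hr.1 hr.2
    exact ge_of_tendsto htend hev
  have hF0 : F 0 = 1 := by rw [hF, dslope_same, hd1]
  have hMVT : ‖F z - 1‖ ≤ 1/2 * ‖z‖ := by
    have := (convex_ball (0:ℂ) 1).norm_image_sub_le_of_norm_deriv_le
      (fun x hx => hFdiff.differentiableAt (hD.mem_nhds hx)) hbound h0 hz
    simpa [hF0] using this
  have hz1 : ‖z‖ < 1 := by simpa [unitDisc, mem_ball_zero_iff] using hz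
  have hzpos : 0 < ‖z‖ := norm_pos_iff.mpr hz0
  have hlow : 1 - ‖z‖/2 ≤ ‖F z‖ := by
    have h1 : (1:ℝ) ≤ ‖F z‖ + ‖F z - 1‖ := by
      calc (1:ℝ) = ‖(1:ℂ)‖ := by simp
        _ = ‖F z - (F z - 1)‖ := by ring_nf
        _ ≤ ‖F z‖ + ‖F z - 1‖ := norm_sub_le _ _
    linarith
  have hFpos : 0 < ‖F z‖ := by linarith
  have hfz : f z ≠ 0 := by
    intro h
    have : F z = 0 := by rw [hFz z hz0, h, zero_div]
    rw [this] at hFpos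
    simp at hFpos
  refine ⟨hfz, ?_⟩
  have heq : z * deriv f z / f z - 1 = (z * deriv f z - f z) / f z := by
    field_simp
  have hnum : ‖z * deriv f z - f z‖ ≤ ‖z‖^2 / 2 := by
    have h1 : z * deriv f z - f z = deriv F z * z^2 := by
      rw [hderivF z hz hz0]
      field_simp
    rw [h1, norm_mul, norm_pow]
    calc ‖deriv F z‖ * ‖z‖^2 ≤ (1/2) * ‖z‖^2 :=
          mul_le_mul_of_nonneg_right (hbound z hz) (by positivity)
      _ = ‖z‖^2/2 := by ring
  have hfzlow : ‖z‖ * (1 - ‖z‖/2) ≤ ‖f z‖ := by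
    have h1 : f z = z * F z := by
      rw [hFz z hz0]; field_simp
    rw [h1, norm_mul]
    exact mul_le_mul_of_nonneg_left hlow (norm_nonneg z)
  rw [heq, norm_div]
  have hden : 0 < ‖z‖ * (1 - ‖z‖/2) := by nlinarith
  calc ‖z * deriv f z - f z‖ / ‖f z‖ ≤ (‖z‖^2/2) / (‖z‖ * (1 - ‖z‖/2)) := by
        apply div_le_div₀ (by positivity) hnum hden hfzlow
    _ = ‖z‖ / (2 - ‖z‖) := by
        rw [div_eq_div_iff (by positivity) (by nlinarith)]
        ring
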